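/- If two stable matchings μ and μ' satisfy: every man weakly prefers his partner in μ' to his partner in μ, then every woman weakly prefers her partner in μ to her partner in μ'. (Opposition of interests between the two sides across the stable lattice.) -/
import Mathlib


open Finset

/-- A stable matching instance: `n` men and `n` women; `mrank m w` is the
(0-indexed) rank of woman `w` in man `m`'s strict preference list (lower = more
preferred); `wrank w m` analogously. -/
structure SMInstance (n : ℕ) where
  mrank : Fin n → Fin n → Fin n
  wrank : Fin n → Fin n → Fin n
  mbij : ∀ m, Function.Bijective (mrank m)
  wbij : ∀ w, Function.Bijective (wrank w)

namespace SMInstance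

variable {n : ℕ}

/-- `(m, w)` is a blocking pair of the perfect matching `μ`. -/
def Blocking (I : SMInstance n) (μ : Equiv.Perm (Fin n)) (m w : Fin n) : Prop :=
  μ m ≠ w ∧ I.mrank m w < I.mrank m (μ m) ∧ I.wrank w m < I.wrank w (μ.symm w)

/-- A matching is stable if it admits no blocking pair. -/
def Stable (I : SMInstance n) (μ : Equiv.Perm (Fin n)) : Prop :=
  ∀ m w, ¬ I.Blocking μ m w

/-- Total (1-indexed) rank of partners over men. -/
def SM (I : SMInstance n) (μ : Equiv.Perm (Fin n)) : ℤ :=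
  ∑ m : Fin n, (((I.mrank m (μ m) : ℕ) : ℤ) + 1)

/-- Total (1-indexed) rank of partners over women. -/
def SW (I : SMInstance n) (μ : Equiv.Perm (Fin n)) : ℤ :=
  ∑ w : Fin n, (((I.wrank w (μ.symm w) : ℕ) : ℤ) + 1)

/-- The sex-equality cost of a matching. -/
def cost (I : SMInstance n) (μ : Equiv.Perm (Fin n)) : ℤ :=
  |I.SM μ - I.SW μ|

end SMInstance

/-- if every man weakly prefers his partner in the stable matching
`μ'` to his partner in the stable matching `μ`, then every woman weakly prefers
her partner in `μ` to her partner in `μ'`. -/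
theorem opposition_of_interests {n : ℕ} (I : SMInstance n)
    (μ μ' : Equiv.Perm (Fin n)) (h : I.Stable μ) (h' : I.Stable μ')
    (hdom : ∀ m : Fin n, I.mrank m (μ' m) ≤ I.mrank m (μ m)) :
    ∀ w : Fin n, I.wrank w (μ.symm w) ≤ I.wrank w (μ'.symm w) := by
  intro w
  by_contra hcon
  push_neg at hcon
  set m := μ'.symm w with hm
  have hμ'm : μ' m = w := by simp [hm]
  have hne : μ m ≠ w := by
    intro he
    have : μ.symm w = m := by rw [← he]; simp
    rw [this] at hcon
    exact lt_irrefl _ hcon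
  have hle : I.mrank m w ≤ I.mrank m (μ m) := by
    have := hdom m; rwa [hμ'm] at this
  have hne2 : I.mrank m w ≠ I.mrank m (μ m) := fun he =>
    hne ((I.mbij m).1 he).symm
  exact h m w ⟨hne, lt_of_le_of_ne hle hne2, hcon⟩
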